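/- With T_S as above, v* the dual of v, and F(k-vector) the joint CDF, one has R_S(t) = 1 - Σ_{A⊆[n]} m_{v*}(A) · P(T_i ≤ t for all i ∈ A), using Σ_{A⊆[n]} m_{v*}(A) = 1. -/

import Mathlib

open scoped ENNReal

/-- The Möbius transform of a set function `v : 2^[n] → ℤ`. -/
def mobiusTransform {n : ℕ} (v : Finset (Fin n) → ℤ) (A : Finset (Fin n)) : ℤ :=
  ∑ B ∈ A.powerset, (-1) ^ (A.card - B.card) * v B

/-- Möbius inversion: summing the Möbius transform over subsets recovers `w`. -/
lemma sum_mobiusTransform_powerset {n : ℕ} (w : Finset (Fin n) → ℤ) (C : Finset (Fin n)) :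
    ∑ A ∈ C.powerset, mobiusTransform w A = w C := by
  classical
  unfold mobiusTransform
  rw [Finset.sum_comm' (s := C.powerset) (t := fun A => A.powerset) (t' := C.powerset)
      (s' := fun B => C.powerset.filter (fun A => B ⊆ A))
      (by
        intro A B
        simp only [Finset.mem_powerset, Finset.mem_filter, Finset.mem_univ, true_and]
        constructor
        · rintro ⟨h1, h2⟩; exact ⟨⟨h1, h2⟩, h2.trans h1⟩
        · rintro ⟨⟨h1, h2⟩, _⟩; exact ⟨h1, h2⟩)]
  have hinner : ∀ B ∈ C.powerset,
      (∑ A ∈ C.powerset.filter (fun A => B ⊆ A), (-1 : ℤ) ^ (A.card - B.card) * w B)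
        = (if C \ B = ∅ then 1 else 0) * w B := by
    intro B hB
    rw [← Finset.sum_mul]
    congr 1
    rw [← Finset.sum_powerset_neg_one_pow_card (x := C \ B)]
    refine Finset.sum_nbij' (fun A => A \ B) (fun D => D ∪ B) ?_ ?_ ?_ ?_ ?_
    · intro A hA
      simp only [Finset.mem_filter, Finset.mem_powerset] at hA ⊢
      exact Finset.sdiff_subset_sdiff hA.1 le_rfl
    · intro D hD
      simp only [Finset.mem_powerset] at hD
      simp only [Finset.mem_filter, Finset.mem_powerset]
      refine ⟨Finset.union_subset (hD.trans (Finset.sdiff_subset)) (Finset.mem_powerset.mp hB),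
        Finset.subset_union_right⟩
    · intro A hA
      simp only [Finset.mem_filter, Finset.mem_powerset] at hA
      exact Finset.sdiff_union_of_subset hA.2
    · intro D hD
      simp only [Finset.mem_powerset] at hD
      have hdisj : Disjoint D B := Finset.disjoint_of_subset_left hD Finset.sdiff_disjoint
      show (D ∪ B) \ B = D
      rw [Finset.union_sdiff_right, Finset.sdiff_eq_self_of_disjoint hdisj]
    · intro A hA
      simp only [Finset.mem_filter, Finset.mem_powerset] at hA
      rw [Finset.card_sdiff_of_subset hA.2]
  rw [Finset.sum_congr rfl hinner]
  rw [Finset.sum_eq_single_of_mem C (Finset.mem_powerset_self C)]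
  · simp
  · intro B hB hBne
    have hsub : B ⊆ C := Finset.mem_powerset.mp hB
    have : C \ B ≠ ∅ := by
      intro h
      exact hBne (Finset.Subset.antisymm hsub (Finset.sdiff_eq_empty_iff_subset.mp h))
    rw [if_neg this, zero_mul]

theorem reliability_dual_mobius {n : ℕ} {Ω : Type*} [MeasurableSpace Ω]
    (μ : MeasureTheory.Measure Ω) [MeasureTheory.IsProbabilityMeasure μ]
    (T : Fin n → Ω → ℝ≥0∞) (hT : ∀ i, Measurable (T i))
    (v : Finset (Fin n) → ℤ)
    (hv : ∀ A, v A = 0 ∨ v A = 1)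
    (hmono : ∀ A B : Finset (Fin n), A ⊆ B → v A ≤ v B)
    (hnonconst : ∃ A B : Finset (Fin n), v A ≠ v B)
    (t : ℝ≥0∞) (ht : 0 ≤ t) :
    (μ {ω | (Finset.univ.filter (fun A : Finset (Fin n) => v A = 1)).sup
        (fun A => A.inf (fun i => T i ω)) > t}).toReal =
      1 - ∑ A : Finset (Fin n), (mobiusTransform (fun B => 1 - v Bᶜ) A : ℝ) *
        (μ {ω | ∀ i ∈ A, T i ω ≤ t}).toReal := by
  classical
  -- v ∅ = 0
  have hv0 : v ∅ = 0 := by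
    obtain ⟨A, B, hAB⟩ := hnonconst
    rcases hv A with hA | hA <;> rcases hv B with hB | hB
    · exact absurd (hA.trans hB.symm) hAB
    · have := hmono ∅ A (Finset.empty_subset A)
      rcases hv ∅ with h | h
      · exact h
      · omega
    · have := hmono ∅ B (Finset.empty_subset B)
      rcases hv ∅ with h | h
      · exact h
      · omega
    · exact absurd (hA.trans hB.symm) hAB
  -- the "dead set" function
  set f : Ω → Finset (Fin n) := fun ω => Finset.univ.filter (fun i => T i ω ≤ t) with hf
  have hmemf : ∀ ω i, i ∈ f ω ↔ T i ω ≤ t := by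
    intro ω i; simp [hf]
  have hmeas : ∀ C : Finset (Fin n), MeasurableSet {ω | f ω = C} := by
    intro C
    have heq : {ω | f ω = C} = ⋂ i, {ω | T i ω ≤ t ↔ i ∈ C} := by
      ext ω
      simp only [Set.mem_setOf_eq, Set.mem_iInter, Finset.ext_iff]
      constructor
      · intro h i; rw [← hmemf ω i]; exact h i
      · intro h i; rw [hmemf ω i]; exact h i
    rw [heq]
    refine MeasurableSet.iInter (fun i => ?_)
    by_cases hi : i ∈ C
    · have : {ω | T i ω ≤ t ↔ i ∈ C} = T i ⁻¹' Set.Iic t := by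
        ext ω; simp [hi, Set.mem_preimage, Set.mem_Iic]
      rw [this]; exact (hT i) measurableSet_Iic
    · have : {ω | T i ω ≤ t ↔ i ∈ C} = (T i ⁻¹' Set.Iic t)ᶜ := by
        ext ω; simp [hi, Set.mem_preimage, Set.mem_Iic]
      rw [this]; exact ((hT i) measurableSet_Iic).compl
  have hdisj : ∀ (s : Finset (Finset (Fin n))),
      (↑s : Set (Finset (Fin n))).PairwiseDisjoint (fun C => {ω | f ω = C}) := by
    intro s C _ D _ hCD
    refine Set.disjoint_left.mpr ?_
    intro ω hC hD
    exact hCD (hC.symm.trans hD)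
  have hsum : ∀ (s : Finset (Finset (Fin n))),
      (μ (⋃ C ∈ s, {ω | f ω = C})).toReal = ∑ C ∈ s, (μ {ω | f ω = C}).toReal := by
    intro s
    rw [MeasureTheory.measure_biUnion_finset (hdisj s) (fun C _ => hmeas C)]
    exact ENNReal.toReal_sum (fun C _ => MeasureTheory.measure_ne_top μ _)
  set p : Finset (Fin n) → ℝ := fun C => (μ {ω | f ω = C}).toReal with hp
  -- LHS
  have hLHS : (μ {ω | (Finset.univ.filter (fun A : Finset (Fin n) => v A = 1)).sup
        (fun A => A.inf (fun i => T i ω)) > t}).toReal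
      = ∑ C ∈ Finset.univ.filter (fun C : Finset (Fin n) => v Cᶜ = 1), p C := by
    rw [← hsum]
    congr 2
    ext ω
    simp only [Set.mem_iUnion, Set.mem_setOf_eq, gt_iff_lt, Finset.mem_filter,
      Finset.mem_univ, true_and, exists_prop]
    constructor
    · intro h
      refine ⟨f ω, ?_, rfl⟩
      rw [Finset.lt_sup_iff] at h
      obtain ⟨A, hA, hinf⟩ := h
      rw [Finset.mem_filter] at hA
      have hsub : A ⊆ (f ω)ᶜ := by
        intro i hi
        rw [Finset.mem_compl, hmemf ω i]
        exact not_le.mpr (lt_of_lt_of_le hinf (Finset.inf_le hi))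
      have := hmono A (f ω)ᶜ hsub
      rcases hv (f ω)ᶜ with h0 | h1
      · omega
      · exact h1
    · rintro ⟨C, hC, hfC⟩
      subst hfC
      rw [Finset.lt_sup_iff]
      refine ⟨(f ω)ᶜ, Finset.mem_filter.mpr ⟨Finset.mem_univ _, hC⟩, ?_⟩
      have hne : ((f ω)ᶜ : Finset (Fin n)).Nonempty := by
        rw [Finset.nonempty_iff_ne_empty]
        intro h
        rw [h] at hC
        omega
      obtain ⟨i0, hi0⟩ := hne
      have hti0 : t < T i0 ω := by
        rw [Finset.mem_compl, hmemf ω i0] at hi0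
        exact not_le.mp hi0
      have htop : t < ⊤ := lt_of_lt_of_le hti0 le_top
      rw [Finset.lt_inf_iff htop]
      intro i hi
      rw [Finset.mem_compl, hmemf ω i] at hi
      exact not_le.mp hi
  -- probabilities of the CDF events
  have hP : ∀ A : Finset (Fin n), (μ {ω | ∀ i ∈ A, T i ω ≤ t}).toReal
      = ∑ C ∈ Finset.univ.filter (fun C : Finset (Fin n) => A ⊆ C), p C := by
    intro A
    rw [← hsum]
    congr 2
    ext ω
    simp only [Set.mem_setOf_eq, Set.mem_iUnion, Finset.mem_filter, Finset.mem_univ,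
      true_and, exists_prop]
    constructor
    · intro h
      exact ⟨f ω, fun i hi => (hmemf ω i).mpr (h i hi), rfl⟩
    · rintro ⟨C, hAC, hfC⟩ i hi
      rw [← hmemf ω i, hfC]
      exact hAC hi
  -- total mass
  have htotal : ∑ C : Finset (Fin n), p C = 1 := by
    rw [← hsum]
    have : (⋃ C ∈ (Finset.univ : Finset (Finset (Fin n))), {ω | f ω = C}) = Set.univ := by
      ext ω
      simp only [Set.mem_iUnion, Finset.mem_univ, Set.mem_univ, iff_true, exists_prop]
      exact ⟨f ω, trivial, rfl⟩
    rw [this]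
    simp
  rw [hLHS]
  have hRHS : ∑ A : Finset (Fin n), (mobiusTransform (fun B => 1 - v Bᶜ) A : ℝ) *
        (μ {ω | ∀ i ∈ A, T i ω ≤ t}).toReal
      = ∑ A : Finset (Fin n), (mobiusTransform (fun B => 1 - v Bᶜ) A : ℝ) *
        ∑ C ∈ Finset.univ.filter (fun C : Finset (Fin n) => A ⊆ C), p C :=
    Finset.sum_congr rfl (fun A _ => by rw [hP A])
  rw [hRHS]
  -- now pure algebra
  have hswap : ∑ A : Finset (Fin n), (mobiusTransform (fun B => 1 - v Bᶜ) A : ℝ) *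
        ∑ C ∈ Finset.univ.filter (fun C : Finset (Fin n) => A ⊆ C), p C
      = ∑ C : Finset (Fin n), ((1 - v Cᶜ : ℤ) : ℝ) * p C := by
    simp_rw [Finset.mul_sum]
    rw [Finset.sum_comm' (s := Finset.univ) (t := fun A : Finset (Fin n) => Finset.univ.filter (fun C : Finset (Fin n) => A ⊆ C))
      (t' := Finset.univ) (s' := fun C : Finset (Fin n) => C.powerset)
      (by
        intro A C
        simp [Finset.mem_powerset])]
    refine Finset.sum_congr rfl (fun C _ => ?_)
    rw [← Finset.sum_mul]
    congr 1
    rw [← sum_mobiusTransform_powerset (fun B => 1 - v Bᶜ) C]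
    push_cast
    rfl
  rw [hswap]
  rw [← htotal, ← Finset.sum_sub_distrib]
  rw [Finset.sum_filter]
  refine Finset.sum_congr rfl (fun C _ => ?_)
  rcases hv Cᶜ with h0 | h1
  · rw [h0, if_neg (by omega)]
    push_cast [h0]
    ring
  · rw [h1, if_pos rfl]
    push_cast [h1]
    ring
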